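/- Let q be a prime power, n ≥ 2, let A_1, ..., A_n be F_q-affine hyperplanes of F_{q^n} in general position, S = ∩_{i=1}^n (F_{q^n} \ A_i), and let χ be a nontrivial multiplicative character of F_{q^n}. Then |∑_{x ∈ S} χ(x)| ≤ ∑_{i=0}^{n-1} C(n,i) · q^{min(i, n/2)}. -/

import Mathlib

open scoped Classical BigOperators

noncomputable section

/-- `A ⊆ F` is an `K`-affine subspace of dimension `t`: a coset `u + V` of a
`t`-dimensional `K`-linear subspace `V`. -/
def IsAffineSubspaceOfDim (K : Type*) {F : Type*} [Field K] [Field F] [Algebra K F]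
    (t : ℕ) (A : Set F) : Prop :=
  ∃ (u : F) (V : Submodule K F), Module.finrank K ↥V = t ∧ A = {x | x - u ∈ V}

/-- A family of `n` affine hyperplanes in general position: any `k ≥ 1` of them
intersect in an affine space of dimension `n - k`. -/
def InGeneralPosition (K : Type*) {F : Type*} [Field K] [Field F] [Algebra K F]
    (n : ℕ) (A : Fin n → Set F) : Prop :=
  ∀ s : Finset (Fin n), s.Nonempty →
    IsAffineSubspaceOfDim K (n - s.card) (⋂ i ∈ s, A i)

/-- `x` is a primitive element of the finite field `F`, i.e. a generator of `Fˣ`. -/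
def IsPrimitive {F : Type*} [Field F] [Fintype F] (x : F) : Prop :=
  orderOf x = Fintype.card F - 1

/-- `W t`: the number of squarefree divisors of `t`. -/
def sqfDivisors (t : ℕ) : ℕ := (t.divisors.filter Squarefree).card

/-- `δ(q, n) = ∑_{i=0}^{n-1} C(n,i) q^{min(i, n/2)}`. -/
def deltaQN (q n : ℕ) : ℝ :=
  ∑ i ∈ Finset.range n, (n.choose i : ℝ) * (q : ℝ) ^ (min (i : ℝ) ((n : ℝ) / 2))


section AuxCharSum

variable {F : Type} [Field F] [Fintype F]

lemma abs_addChar (ψ : AddChar F ℂ) (x : F) : ‖ψ x‖ = 1 := by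
  have hR : 0 < ringChar F := Nat.pos_of_ne_zero (CharP.ringChar_ne_zero_of_finite F)
  have h := Complex.norm_eq_one_of_mem_rootsOfUnity (ψ.val_mem_rootsOfUnity x hR)
  rw [← IsUnit.unit_spec (ψ.val_isUnit x)]
  exact h

lemma abs_mulChar_le_one (χ : MulChar F ℂ) (x : F) : ‖χ x‖ ≤ 1 := by
  rcases eq_or_ne x 0 with rfl | hx
  · rw [χ.map_zero]; simp
  · have hu : IsUnit x := IsUnit.mk0 x hx
    have h1 : χ⁻¹ x * χ x = 1 := by
      rw [← MulChar.mul_apply, MulChar.inv_mul, MulChar.one_apply hu]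
    have h2 : (starRingEnd ℂ) (χ x) = χ⁻¹ x := MulChar.star_apply' χ x
    have h3 : Complex.normSq (χ x) = 1 := by
      have := congrArg (‖·‖) h1
      rw [norm_mul, ← h2, norm_one] at this
      rw [← Complex.sq_norm]
      rw [Complex.norm_conj] at this
      nlinarith [norm_nonneg (χ x)]
    rw [Complex.norm_def, h3, Real.sqrt_one]

lemma abs_gaussSum_eq {χ : MulChar F ℂ} (hχ : χ ≠ 1) {ψ : AddChar F ℂ}
    (hψ : ψ.IsPrimitive) :
    ‖gaussSum χ ψ‖ = Real.sqrt (Fintype.card F) := by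
  have hR : 0 < ringChar F := Nat.pos_of_ne_zero (CharP.ringChar_ne_zero_of_finite F)
  have hconj : (starRingEnd ℂ) (gaussSum χ ψ) = gaussSum χ⁻¹ ψ⁻¹ := by
    unfold gaussSum
    rw [map_sum]
    refine Finset.sum_congr rfl fun a _ => ?_
    rw [map_mul, AddChar.starComp_apply hR, ← Complex.star_def, MulChar.star_apply' χ a]
  have hcard := gaussSum_mul_gaussSum_eq_card hχ hψ
  rw [← hconj, Complex.mul_conj] at hcard
  have h2 : Complex.normSq (gaussSum χ ψ) = (Fintype.card F : ℝ) := by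
    exact_mod_cast hcard
  rw [Complex.norm_def, h2]

lemma coset_card (V : AddSubgroup F) (u : F) :
    (Finset.univ.filter (fun x => x - u ∈ V)).card = Fintype.card V := by
  rw [← Finset.card_univ]
  apply Finset.card_bij' (fun x hx => (⟨x - u, (Finset.mem_filter.mp hx).2⟩ : V))
    (fun v _ => (v : F) + u)
  · intro x hx; simp
  · intro v _; simp [Finset.mem_filter]
  · intro x hx; simp
  · intro v _; simp

lemma coset_weil (χ : MulChar F ℂ) (hχ : χ ≠ 1) (V : AddSubgroup F) (u : F) :
    ‖∑ x ∈ Finset.univ.filter (fun x => x - u ∈ V), χ x‖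
      ≤ Real.sqrt (Fintype.card F) := by
  set ψ := AddChar.FiniteField.primitiveChar_to_Complex F with hψdef
  have hψ : ψ.IsPrimitive := AddChar.FiniteField.primitiveChar_to_Complex_isPrimitive F
  set T := ∑ x ∈ Finset.univ.filter (fun x => x - u ∈ V), χ x with hT
  set c : F → ℂ := fun b => ∑ v : V, ψ (-(b * v)) with hcdef
  set G : F → ℂ := fun b => ∑ x : F, χ x * ψ (b * x) with hGdef
  -- indicator identity
  have key : ∀ y : F, ∑ b : F, ∑ v : V, ψ (b * (y - v)) = if y ∈ V then (Fintype.card F : ℂ) else 0 := by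
    intro y
    rw [Finset.sum_comm]
    have h1 : ∀ v : V, ∑ b : F, ψ (b * (y - v)) = if (y - (v : F)) = 0 then (Fintype.card F : ℂ) else 0 := by
      intro v
      have h := AddChar.sum_mulShift (ψ := ψ) (y - (v : F)) hψ
      rw [h]
      split_ifs <;> simp
    rw [Finset.sum_congr rfl (fun v _ => h1 v)]
    by_cases hy : y ∈ V
    · rw [if_pos hy, Finset.sum_eq_single (⟨y, hy⟩ : V)]
      · simp
      · intro v _ hv
        rw [if_neg]
        intro h
        exact hv (by ext; symm; simpa [sub_eq_zero] using h)
      · simp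
    · rw [if_neg hy]
      apply Finset.sum_eq_zero
      intro v _
      rw [if_neg]
      intro h
      rw [sub_eq_zero] at h
      exact hy (h ▸ v.2)
  -- main identity
  have main : (Fintype.card F : ℂ) * T = ∑ b : F, ψ (-(b * u)) * c b * G b := by
    have e1 : (Fintype.card F : ℂ) * T
        = ∑ x : F, χ x * (if (x - u) ∈ V then (Fintype.card F : ℂ) else 0) := by
      rw [hT, Finset.mul_sum, Finset.sum_filter]
      refine Finset.sum_congr rfl fun x _ => ?_
      split_ifs <;> ring
    rw [e1]
    simp_rw [← key]
    calc ∑ x : F, χ x * ∑ b : F, ∑ v : V, ψ (b * (x - u - v))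
        = ∑ x : F, ∑ b : F, ∑ v : V, χ x * ψ (b * (x - u - v)) := by
          simp_rw [Finset.mul_sum]
      _ = ∑ b : F, ∑ x : F, ∑ v : V, χ x * ψ (b * (x - u - v)) := Finset.sum_comm
      _ = ∑ b : F, ψ (-(b * u)) * c b * G b := by
          refine Finset.sum_congr rfl fun b _ => ?_
          have hψ3 : ∀ s t w : F, ψ (s + t + w) = ψ s * ψ t * ψ w := by
            intro s t w; rw [AddChar.map_add_eq_mul, AddChar.map_add_eq_mul]
          have e2 : ∀ (x : F) (v : V), χ x * ψ (b * (x - u - v))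
              = (ψ (-(b * u)) * ψ (-(b * v))) * (χ x * ψ (b * x)) := by
            intro x v
            have harg : b * (x - u - (v : F)) = -(b * u) + -(b * (v : F)) + b * x := by ring
            rw [harg, hψ3]; ring
          calc ∑ x : F, ∑ v : V, χ x * ψ (b * (x - u - v))
              = ∑ x : F, ∑ v : V, (ψ (-(b * u)) * ψ (-(b * v))) * (χ x * ψ (b * x)) := by
                exact Finset.sum_congr rfl fun x _ => Finset.sum_congr rfl fun v _ => e2 x v
            _ = ∑ v : V, ∑ x : F, (ψ (-(b * u)) * ψ (-(b * v))) * (χ x * ψ (b * x)) :=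
                Finset.sum_comm
            _ = (∑ v : V, ψ (-(b * u)) * ψ (-(b * v))) * (∑ x : F, χ x * ψ (b * x)) :=
                (Finset.sum_mul_sum _ _ _ _).symm
            _ = ψ (-(b * u)) * c b * G b := by rw [← Finset.mul_sum, hcdef, hGdef]
  -- facts about G
  have hGzero : G 0 = 0 := by
    simp only [hGdef, zero_mul, AddChar.map_zero_eq_one, mul_one]
    exact MulChar.sum_eq_zero_of_ne_one hχ
  have hGabs : ∀ b : F, ‖G b‖ ≤ Real.sqrt (Fintype.card F) := by
    intro b
    rcases eq_or_ne b 0 with rfl | hb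
    · rw [hGzero]; simp only [norm_zero]; exact Real.sqrt_nonneg _
    · have hne : ψ.mulShift b ≠ 1 := hψ hb
      have hprim : (ψ.mulShift b).IsPrimitive := AddChar.IsPrimitive.of_ne_one hne
      have hGg : G b = gaussSum χ (ψ.mulShift b) := by
        simp only [hGdef, gaussSum, AddChar.mulShift_apply]
      rw [hGg, abs_gaussSum_eq hχ hprim]
  -- c dichotomy
  have hc : ∀ b : F, c b = (Fintype.card V : ℂ) ∨ c b = 0 := by
    intro b
    set φ : AddChar V ℂ := ψ.compAddMonoidHom ((AddMonoidHom.mulLeft (-b)).comp V.subtype)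
      with hφdef
    have hval : ∀ v : V, φ v = ψ (-(b * v)) := by
      intro v
      simp [hφdef, AddChar.compAddMonoidHom_apply, neg_mul]
    have hcb : c b = ∑ v : V, φ v := by
      simp only [hcdef]
      exact Finset.sum_congr rfl fun v _ => (hval v).symm
    rw [hcb, AddChar.sum_eq_ite]
    split_ifs
    · left; simp
    · right; rfl
  -- sum of c
  have hcsum : ∑ b : F, c b = (Fintype.card F : ℂ) := by
    simp only [hcdef]
    rw [Finset.sum_comm]
    have h1 : ∀ v : V, ∑ b : F, ψ (-(b * (v : F)))
        = if -(v : F) = 0 then (Fintype.card F : ℂ) else 0 := by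
      intro v
      have h := AddChar.sum_mulShift (ψ := ψ) (-(v : F)) hψ
      simp only [mul_neg] at h
      rw [h]
      split_ifs <;> simp
    rw [Finset.sum_congr rfl fun v _ => h1 v]
    rw [Finset.sum_eq_single (⟨0, V.zero_mem⟩ : V)]
    · simp
    · intro v _ hv
      rw [if_neg]
      simp only [neg_eq_zero]
      intro h
      exact hv (by ext; simp [h])
    · simp
  -- abs of c sum
  have habsc : ∑ b : F, ‖c b‖ = (Fintype.card F : ℝ) := by
    have hcast : ((∑ b : F, ‖c b‖ : ℝ) : ℂ) = (Fintype.card F : ℂ) := by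
      push_cast
      rw [← hcsum]
      refine Finset.sum_congr rfl fun b _ => ?_
      rcases hc b with h | h <;> rw [h] <;> simp
    exact_mod_cast hcast
  -- final estimate
  have hF0 : (0:ℝ) < (Fintype.card F : ℝ) := by exact_mod_cast Fintype.card_pos
  have hbound : (Fintype.card F : ℝ) * ‖T‖
      ≤ (Fintype.card F : ℝ) * Real.sqrt (Fintype.card F) := by
    have h1 : ‖(Fintype.card F : ℂ) * T‖
        ≤ ∑ b : F, ‖ψ (-(b * u)) * c b * G b‖ := by
      rw [main]; exact norm_sum_le _ _
    have h2 : ∀ b : F, ‖ψ (-(b * u)) * c b * G b‖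
        ≤ ‖c b‖ * Real.sqrt (Fintype.card F) := by
      intro b
      rw [norm_mul, norm_mul, abs_addChar, one_mul]
      exact mul_le_mul_of_nonneg_left (hGabs b) (norm_nonneg _)
    calc (Fintype.card F : ℝ) * ‖T‖ = ‖(Fintype.card F : ℂ) * T‖ := by
          rw [norm_mul, Complex.norm_natCast]
      _ ≤ ∑ b : F, ‖ψ (-(b * u)) * c b * G b‖ := h1
      _ ≤ ∑ b : F, ‖c b‖ * Real.sqrt (Fintype.card F) :=
          Finset.sum_le_sum fun b _ => h2 b
      _ = (∑ b : F, ‖c b‖) * Real.sqrt (Fintype.card F) := by rw [Finset.sum_mul]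
      _ = (Fintype.card F : ℝ) * Real.sqrt (Fintype.card F) := by rw [habsc]
  exact (mul_le_mul_iff_right₀ hF0).mp hbound

lemma abs_sum_le_card {F : Type} [Field F] [Fintype F] (χ : MulChar F ℂ) (s : Finset F) :
    ‖∑ x ∈ s, χ x‖ ≤ (s.card : ℝ) := by
  calc ‖∑ x ∈ s, χ x‖ ≤ ∑ x ∈ s, ‖χ x‖ := norm_sum_le _ _
    _ ≤ ∑ x ∈ s, (1:ℝ) := Finset.sum_le_sum fun x _ => abs_mulChar_le_one χ x
    _ = (s.card : ℝ) := by simp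

lemma mem_inf_iff {α β : Type*} [Fintype β] [DecidableEq β] (t : Finset α) (S : α → Finset β)
    (a : β) : a ∈ t.inf S ↔ ∀ i ∈ t, a ∈ S i := by
  constructor
  · intro h i hi
    exact (Finset.inf_le hi : t.inf S ⊆ S i) h
  · intro h
    have : ({a} : Finset β) ≤ t.inf S := Finset.le_inf fun i hi =>
      Finset.singleton_subset_iff.mpr (h i hi)
    exact Finset.singleton_subset_iff.mp this


end AuxCharSum

theorem charSum_avoiding_bound (q n : ℕ) (hq : IsPrimePow q) (hn : 2 ≤ n)
    (K F : Type) [Field K] [Field F] [Algebra K F] [Fintype K] [Fintype F]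
    (hK : Fintype.card K = q) (hd : Module.finrank K F = n)
    (A : Fin n → Set F) (hgen : InGeneralPosition K n A)
    (χ : MulChar F ℂ) (hχ : χ ≠ 1) :
    ‖∑ x ∈ Finset.univ.filter (· ∈ ⋂ i, (A i)ᶜ), χ x‖
      ≤ deltaQN q n := by
  classical
  have hq1 : (1:ℝ) ≤ (q:ℝ) := by
    have h2 : 1 ≤ q := le_trans one_le_two hq.two_le
    exact_mod_cast h2
  have hq0 : (0:ℝ) ≤ (q:ℝ) := le_trans zero_le_one hq1
  have hcardF : Fintype.card F = q ^ n := by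
    rw [← hK, ← hd]; exact Module.card_eq_pow_finrank
  have hsqrt : Real.sqrt (Fintype.card F) = (q:ℝ) ^ ((n:ℝ)/2) := by
    rw [hcardF, Real.sqrt_eq_rpow]
    push_cast
    rw [← Real.rpow_natCast (q:ℝ) n, ← Real.rpow_mul hq0]
    congr 1
    ring
  set S : Fin n → Finset F := fun i => (A i).toFinset with hS
  have h0 : Finset.univ.filter (· ∈ ⋂ i, (A i)ᶜ) = Finset.univ.inf fun i => (S i)ᶜ := by
    ext x
    simp [hS, mem_inf_iff, Set.mem_iInter]
  rw [h0, Finset.inclusion_exclusion_sum_inf_compl Finset.univ S (fun a => χ a)]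
  set Q : ℕ → ℝ := fun m => (q:ℝ) ^ (min (m:ℝ) ((n:ℝ)/2)) with hQ
  set g : ℕ → ℝ := fun k => if k = 0 then 0 else Q (n - k) with hg
  have hpiece : ∀ t ∈ (Finset.univ : Finset (Fin n)).powerset,
      ‖∑ a ∈ t.inf S, χ a‖ ≤ g t.card := by
    intro t _
    rcases Finset.eq_empty_or_nonempty t with rfl | ht
    · have hz : ∑ a ∈ (∅ : Finset (Fin n)).inf S, χ a = 0 := by
        rw [Finset.inf_empty, Finset.top_eq_univ]
        exact MulChar.sum_eq_zero_of_ne_one hχ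
      rw [hz]
      simp [hg]
    · obtain ⟨u, V, hV, hset⟩ := hgen t ht
      have heq : t.inf S = Finset.univ.filter (fun x => x - u ∈ V.toAddSubgroup) := by
        ext x
        simp only [mem_inf_iff, Finset.mem_filter, Finset.mem_univ, true_and, hS,
          Set.mem_toFinset]
        have hx : (∀ i ∈ t, x ∈ A i) ↔ x ∈ ⋂ i ∈ t, A i := by simp [Set.mem_iInter]
        rw [hx, hset]
        simp [Submodule.mem_toAddSubgroup]
      have hVcard : Fintype.card ↥V = q ^ (n - t.card) := by
        rw [← hK, ← hV]; exact Module.card_eq_pow_finrank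
      have b1 : ‖∑ a ∈ t.inf S, χ a‖ ≤ (q:ℝ) ^ (((n - t.card : ℕ)):ℝ) := by
        calc ‖∑ a ∈ t.inf S, χ a‖ ≤ (((t.inf S).card : ℕ) : ℝ) :=
              abs_sum_le_card χ _
          _ = (q:ℝ) ^ (((n - t.card : ℕ)):ℝ) := by
              rw [heq, coset_card V.toAddSubgroup u]
              have hcc : Fintype.card ↥V.toAddSubgroup = Fintype.card ↥V := rfl
              rw [hcc, hVcard, Real.rpow_natCast]
              push_cast
              ring
      have b2 : ‖∑ a ∈ t.inf S, χ a‖ ≤ (q:ℝ) ^ ((n:ℝ)/2) := by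
        rw [heq, ← hsqrt]
        exact coset_weil χ hχ _ u
      have hne : t.card ≠ 0 := ht.card_pos.ne'
      simp only [hg, if_neg hne, hQ]
      rcases le_total (((n - t.card : ℕ)):ℝ) ((n:ℝ)/2) with h | h
      · rw [min_eq_left h]; exact b1
      · rw [min_eq_right h]; exact b2
  have habs_smul : ∀ (k : ℕ) (z : ℂ), ‖(-1:ℤ)^k • z‖ = ‖z‖ := by
    intro k z
    rw [zsmul_eq_mul, norm_mul]
    simp
  calc ‖∑ t ∈ (Finset.univ : Finset (Fin n)).powerset,
          (-1)^t.card • ∑ a ∈ t.inf S, χ a‖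
      ≤ ∑ t ∈ (Finset.univ : Finset (Fin n)).powerset,
          ‖(-1)^t.card • ∑ a ∈ t.inf S, χ a‖ := norm_sum_le _ _
    _ = ∑ t ∈ (Finset.univ : Finset (Fin n)).powerset,
          ‖∑ a ∈ t.inf S, χ a‖ := by
        exact Finset.sum_congr rfl fun t _ => habs_smul t.card _
    _ ≤ ∑ t ∈ (Finset.univ : Finset (Fin n)).powerset, g t.card :=
        Finset.sum_le_sum hpiece
    _ = ∑ k ∈ Finset.range (n+1), n.choose k • g k := by
        rw [Finset.sum_powerset_apply_card]
        simp
    _ = deltaQN q n := by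
        rw [Finset.sum_range_succ']
        have hg0 : (n.choose 0) • g 0 = 0 := by simp [hg]
        rw [hg0, add_zero]
        rw [deltaQN, ← Finset.sum_range_reflect (fun j => (n.choose j : ℝ) * Q j) n]
        refine Finset.sum_congr rfl fun k hk => ?_
        rw [Finset.mem_range] at hk
        have h1 : k + 1 ≠ 0 := Nat.succ_ne_zero k
        have h2 : n - (k+1) = n - 1 - k := by omega
        have h3 : n.choose (k+1) = n.choose (n - 1 - k) := by
          rw [← h2, Nat.choose_symm (by omega : k + 1 ≤ n)]
        simp only [hg, if_neg h1, nsmul_eq_mul, h2, h3]
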